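/- Assume α₁, α₂, α₃ > 0 and α₁+d₂ > 0, α₂+d₁ > 0, α₃+d₃ > 0. Set σ₁ = α₁(α₃+d₃) + α₂(α₁+d₂) + α₃(α₂+d₁), σ₂ = (α₁+d₂)+(α₂+d₁)+(α₃+d₃), λ² = 4(α₂+d₁)(α₁+d₂)(α₃+d₃)/σ₂, and Q* = (√((α₃+d₃)/σ₂), √((α₁+d₂)/σ₂), √((α₂+d₁)/σ₂)). Then the characteristic polynomial of the Jacobian matrix of b at Q* factors as (X + 2σ₁/σ₂)·(X² + λ²); in particular the Jacobian at Q* has one real eigenvalue −2σ₁/σ₂ and a pair of purely imaginary eigenvalues ±iλ with λ = 2√((α₂+d₁)(α₁+d₂)(α₃+d₃)/σ₂). -/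

import Mathlib

set_option maxHeartbeats 2000000


open scoped RealInnerProductSpace

/-- The cubic Kolmogorov vector field on `ℝ³` (modelled as `EuclideanSpace ℝ (Fin 3)`):
`b(x)₁ = x₁(α₁ − α₁x₁² − (α₁+α₂+d₁)x₂² + d₂x₃²)`,
`b(x)₂ = x₂(α₂ + d₁x₁² − α₂x₂² − (α₂+α₃+d₃)x₃²)`,
`b(x)₃ = x₃(α₃ − (α₃+α₁+d₂)x₁² + d₃x₂² − α₃x₃²)`. -/
noncomputable def bVF (α₁ α₂ α₃ d₁ d₂ d₃ : ℝ) (x : EuclideanSpace ℝ (Fin 3)) :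
    EuclideanSpace ℝ (Fin 3) :=
  (WithLp.equiv 2 (Fin 3 → ℝ)).symm
    ![x 0 * (α₁ - α₁ * (x 0)^2 - (α₁ + α₂ + d₁) * (x 1)^2 + d₂ * (x 2)^2),
      x 1 * (α₂ + d₁ * (x 0)^2 - α₂ * (x 1)^2 - (α₂ + α₃ + d₃) * (x 2)^2),
      x 2 * (α₃ - (α₃ + α₁ + d₂) * (x 0)^2 + d₃ * (x 1)^2 - α₃ * (x 2)^2)]

/-- Auxiliary derivative: the Jacobian row of a cubic Kolmogorov component. -/
noncomputable def Dc (i : Fin 3) (c0 c1 c2 c3 : ℝ) (x : EuclideanSpace ℝ (Fin 3)) :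
    EuclideanSpace ℝ (Fin 3) →L[ℝ] ℝ :=
  (c0 + c1 * (x 0 * x 0) + c2 * (x 1 * x 1) + c3 * (x 2 * x 2)) • EuclideanSpace.proj i
    + x i • ((2 * c1 * x 0) • (EuclideanSpace.proj 0 : EuclideanSpace ℝ (Fin 3) →L[ℝ] ℝ)
      + (2 * c2 * x 1) • EuclideanSpace.proj 1 + (2 * c3 * x 2) • EuclideanSpace.proj 2)

lemma hasFDerivAt_aux (c0 c1 c2 c3 : ℝ) (i : Fin 3) (x : EuclideanSpace ℝ (Fin 3)) :
    HasFDerivAt (fun y : EuclideanSpace ℝ (Fin 3) =>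
      y i * (c0 + c1 * (y 0 * y 0) + c2 * (y 1 * y 1) + c3 * (y 2 * y 2)))
      (Dc i c0 c1 c2 c3 x) x := by
  have hp : ∀ j : Fin 3, HasFDerivAt (fun y : EuclideanSpace ℝ (Fin 3) => y j)
      (EuclideanSpace.proj j : EuclideanSpace ℝ (Fin 3) →L[ℝ] ℝ) x := by
    intro j
    have he : (fun y : EuclideanSpace ℝ (Fin 3) => y j) = ⇑(EuclideanSpace.proj j : EuclideanSpace ℝ (Fin 3) →L[ℝ] ℝ) := rfl
    rw [he]
    exact (EuclideanSpace.proj j : EuclideanSpace ℝ (Fin 3) →L[ℝ] ℝ).hasFDerivAt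
  have h := (hp i).mul
    ((((hasFDerivAt_const c0 x).add (((hp 0).mul (hp 0)).const_mul c1)).add
      (((hp 1).mul (hp 1)).const_mul c2)).add (((hp 2).mul (hp 2)).const_mul c3))
  refine h.congr_fderiv ?_
  ext v
  simp [Dc, ContinuousLinearMap.add_apply, ContinuousLinearMap.smul_apply, smul_eq_mul]
  ring

lemma Dc_single (i : Fin 3) (c0 c1 c2 c3 : ℝ) (x : EuclideanSpace ℝ (Fin 3)) (j : Fin 3) :
    Dc i c0 c1 c2 c3 x (EuclideanSpace.single j 1)
      = (c0 + c1 * (x 0 * x 0) + c2 * (x 1 * x 1) + c3 * (x 2 * x 2)) * (if i = j then 1 else 0)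
        + x i * ((2 * c1 * x 0) * (if (0 : Fin 3) = j then 1 else 0)
          + (2 * c2 * x 1) * (if (1 : Fin 3) = j then 1 else 0)
          + (2 * c3 * x 2) * (if (2 : Fin 3) = j then 1 else 0)) := by
  simp only [Dc, ContinuousLinearMap.add_apply, ContinuousLinearMap.smul_apply,
    PiLp.proj_apply, EuclideanSpace.single_apply, smul_eq_mul]


lemma ident1 (α₁ α₂ α₃ d₁ d₂ d₃ S s1 s2 s3 : ℝ) (hS0 : S ≠ 0)
    (hSdef : S = (α₁ + d₂) + (α₂ + d₁) + (α₃ + d₃))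
    (hm1 : s1 ^ 2 * S = α₃ + d₃) (hm2 : s2 ^ 2 * S = α₁ + d₂)
    (hm3 : s3 ^ 2 * S = α₂ + d₁) :
    (α₁ - 3*α₁*s1^2 - (α₁+α₂+d₁)*s2^2 + d₂*s3^2) + (α₂ + d₁*s1^2 - 3*α₂*s2^2 - (α₂+α₃+d₃)*s3^2) + (α₃ - (α₃+α₁+d₂)*s1^2 + d₃*s2^2 - 3*α₃*s3^2)
      = -(2 * (α₁ * (α₃ + d₃) + α₂ * (α₁ + d₂) + α₃ * (α₂ + d₁)) / S) := by
  rw [← neg_div, eq_div_iff hS0]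
  linear_combination ((-1)*d₂ + 1*d₁ + (-1)*α₃ + (-4)*α₁) * hm1 + (1*d₃ + (-1)*d₁ + (-4)*α₂ + (-1)*α₁) * hm2 + ((-1)*d₃ + 1*d₂ + (-4)*α₃ + (-1)*α₂) * hm3 + (1*α₃ + 1*α₂ + 1*α₁) * hSdef

lemma ident2 (α₁ α₂ α₃ d₁ d₂ d₃ S s1 s2 s3 : ℝ) (hS0 : S ≠ 0)
    (hSdef : S = (α₁ + d₂) + (α₂ + d₁) + (α₃ + d₃))
    (hm1 : s1 ^ 2 * S = α₃ + d₃) (hm2 : s2 ^ 2 * S = α₁ + d₂)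
    (hm3 : s3 ^ 2 * S = α₂ + d₁) :
    (α₁ - 3*α₁*s1^2 - (α₁+α₂+d₁)*s2^2 + d₂*s3^2)*(α₂ + d₁*s1^2 - 3*α₂*s2^2 - (α₂+α₃+d₃)*s3^2) - (-2*(α₁+α₂+d₁)*s1*s2)*(2*d₁*s1*s2) + (α₁ - 3*α₁*s1^2 - (α₁+α₂+d₁)*s2^2 + d₂*s3^2)*(α₃ - (α₃+α₁+d₂)*s1^2 + d₃*s2^2 - 3*α₃*s3^2) - (2*d₂*s1*s3)*(-2*(α₃+α₁+d₂)*s1*s3)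
      + (α₂ + d₁*s1^2 - 3*α₂*s2^2 - (α₂+α₃+d₃)*s3^2)*(α₃ - (α₃+α₁+d₂)*s1^2 + d₃*s2^2 - 3*α₃*s3^2) - (-2*(α₂+α₃+d₃)*s2*s3)*(2*d₃*s2*s3)
      = 4 * (α₂ + d₁) * (α₁ + d₂) * (α₃ + d₃) / S := by
  rw [eq_div_iff hS0]
  refine mul_left_cancel₀ hS0 ?_
  linear_combination (1*d₂*d₃*S*s3^2 + 3*d₂^2*S*s3^2 + 1*d₁*d₃*S*s2^2 + 1*d₁*d₂*S*s3^2 + 1*d₁*d₂*S*s2^2 + (-1)*d₁*d₂*S*s1^2 + (-1)*d₁*d₂*d₃ + 3*d₁^2*S*s2^2 + 1*α₃*d₃*S*s3^2 + 4*α₃*d₂*S*s3^2 + 1*α₃*d₁*S + (-3)*α₃*d₁*S*s3^2 + 1*α₃*d₁*S*s2^2 + (-1)*α₃*d₁*S*s1^2 + (-1)*α₃*d₁*d₃ + (-1)*α₃*d₁*d₂ + 1*α₃^2*S*s3^2 + (-1)*α₃^2*d₁ + (-1)*α₂*d₂*S + 1*α₂*d₂*S*s3^2 + 4*α₂*d₂*S*s2^2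 + 3*α₂*d₁*S*s2^2 + (-1)*α₂*α₃*S + 1*α₂*α₃*S*s3^2 + 4*α₂*α₃*S*s2^2 + 4*α₁*d₃*S*s3^2 + (-3)*α₁*d₃*S*s2^2 + (-1)*α₁*d₂*S + 3*α₁*d₂*S*s3^2 + 1*α₁*d₂*S*s2^2 + 3*α₁*d₂*S*s1^2 + 3*α₁*d₂*d₃ + 1*α₁*d₁*S + 4*α₁*d₁*S*s2^2 + (-4)*α₁*d₁*S*s1^2 + (-4)*α₁*d₁*d₃ + (-4)*α₁*α₃*S + 13*α₁*α₃*S*s3^2 + 1*α₁*α₃*S*s2^2 + 3*α₁*α₃*S*s1^2 + 3*α₁*α₃*d₃ + 3*α₁*α₃*d₂ + (-4)*α₁*α₃*d₁ + 3*α₁*α₃^2 + (-4)*α₁*α₂*S + 4*α₁*α₂*S*s3^2 + 13*α₁*α₂*S*s2^2 + (-1)*α₁^2*S + 1*α₁^2*S*s2^2 + 3*α₁^2*S*s1^2 + 3*α₁^2*d₃ + 3*α₁^2*α₃) * hm1 + (3*d₃^2*S*s3^2 + 1*d₂*d₃*S*s3^2 + 1*d₁*d₃*S*s3^2 + (-1)*d₁*d₃*S*s2^2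 + 1*d₁*d₃^2 + 3*d₁^2*d₃ + 3*α₃*d₃*S*s3^2 + (-1)*α₃*d₁*S + 4*α₃*d₁*S*s3^2 + 2*α₃*d₁*d₃ + 1*α₃*d₁*d₂ + 3*α₃*d₁^2 + 1*α₃^2*d₁ + 1*α₂*d₃*S + 4*α₂*d₃*S*s3^2 + (-4)*α₂*d₃*S*s2^2 + (-3)*α₂*d₂*S*s3^2 + (-1)*α₂*d₁*S + 1*α₂*d₁*S*s3^2 + 3*α₂*d₁*S*s2^2 + 3*α₂*d₁*d₃ + 3*α₂*d₁*d₂ + (-4)*α₂*α₃*S + 13*α₂*α₃*S*s3^2 + 4*α₂*α₃*d₃ + 4*α₂*α₃*d₂ + 3*α₂*α₃*d₁ + 4*α₂*α₃^2 + (-1)*α₂^2*S + 1*α₂^2*S*s3^2 + 3*α₂^2*S*s2^2 + 3*α₂^2*d₂ + 1*α₁*d₃*S + 1*α₁*d₃*S*s3^2 + (-1)*α₁*d₃*S*s2^2 + (-3)*α₁*d₃^2 + 3*α₁*d₁*d₃ + (-1)*α₁*α₃*S + 4*α₁*α₃*S*s3^2 + (-2)*α₁*α₃*d₃ + 1*α₁*α₃*d₂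 + 4*α₁*α₃*d₁ + 1*α₁*α₃^2 + (-4)*α₁*α₂*S + 1*α₁*α₂*S*s3^2 + 3*α₁*α₂*S*s2^2 + 9*α₁*α₂*d₃ + 3*α₁*α₂*d₂ + 3*α₁*α₂*d₁ + 13*α₁*α₂*α₃ + 3*α₁*α₂^2 + 1*α₁^2*α₃ + 3*α₁^2*α₂) * hm2 + ((-1)*d₂*d₃*S*s3^2 + 4*d₂*d₃^2 + 4*d₂^2*d₃ + 1*d₁*d₂*d₃ + (-1)*α₃*d₃*S + 3*α₃*d₃*S*s3^2 + 1*α₃*d₃^2 + 1*α₃*d₂*S + (-4)*α₃*d₂*S*s3^2 + 8*α₃*d₂*d₃ + 3*α₃*d₂^2 + 1*α₃*d₁*d₂ + (-1)*α₃^2*S + 3*α₃^2*S*s3^2 + 2*α₃^2*d₃ + 4*α₃^2*d₂ + 1*α₃^3 + 1*α₂*d₂*S + (-1)*α₂*d₂*S*s3^2 + 4*α₂*d₂*d₃ + (-3)*α₂*d₂^2 + (-4)*α₂*α₃*S + 3*α₂*α₃*S*s3^2 + 4*α₂*α₃*d₃ + 10*α₂*α₃*d₂ + 3*α₂*α₃*d₁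 + 4*α₂*α₃^2 + 3*α₂^2*α₃ + (-1)*α₁*d₃*S + 7*α₁*d₃^2 + 5*α₁*d₂*d₃ + 1*α₁*d₁*d₃ + (-4)*α₁*α₃*S + 20*α₁*α₃*d₃ + 7*α₁*α₃*d₂ + 4*α₁*α₃*d₁ + 13*α₁*α₃^2 + (-1)*α₁*α₂*S + 8*α₁*α₂*d₃ + (-2)*α₁*α₂*d₂ + 1*α₁*α₂*d₁ + 17*α₁*α₂*α₃ + 1*α₁*α₂^2 + 1*α₁^2*d₃ + 4*α₁^2*α₃ + 1*α₁^2*α₂) * hm3 + ((-4)*d₁*d₂*d₃ + (-4)*α₃*d₁*d₂ + (-4)*α₂*d₂*d₃ + 1*α₂*α₃*S + (-1)*α₂*α₃*d₃ + (-7)*α₂*α₃*d₂ + (-3)*α₂*α₃*d₁ + (-1)*α₂*α₃^2 + (-3)*α₂^2*α₃ + (-4)*α₁*d₁*d₃ + 1*α₁*α₃*S + (-3)*α₁*α₃*d₃ + (-1)*α₁*α₃*d₂ + (-7)*α₁*α₃*d₁ + (-3)*α₁*α₃^2 + 1*α₁*α₂*S + (-7)*α₁*α₂*d₃ + (-3)*α₁*α₂*d₂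 + (-1)*α₁*α₂*d₁ + (-13)*α₁*α₂*α₃ + (-1)*α₁*α₂^2 + (-1)*α₁^2*α₃ + (-3)*α₁^2*α₂) * hSdef

lemma ident3 (α₁ α₂ α₃ d₁ d₂ d₃ S s1 s2 s3 : ℝ) (hS0 : S ≠ 0)
    (hSdef : S = (α₁ + d₂) + (α₂ + d₁) + (α₃ + d₃))
    (hm1 : s1 ^ 2 * S = α₃ + d₃) (hm2 : s2 ^ 2 * S = α₁ + d₂)
    (hm3 : s3 ^ 2 * S = α₂ + d₁) :
    (α₁ - 3*α₁*s1^2 - (α₁+α₂+d₁)*s2^2 + d₂*s3^2) * ((α₂ + d₁*s1^2 - 3*α₂*s2^2 - (α₂+α₃+d₃)*s3^2)*(α₃ - (α₃+α₁+d₂)*s1^2 + d₃*s2^2 - 3*α₃*s3^2) - (-2*(α₂+α₃+d₃)*s2*s3)*(2*d₃*s2*s3))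
      - (-2*(α₁+α₂+d₁)*s1*s2) * ((2*d₁*s1*s2)*(α₃ - (α₃+α₁+d₂)*s1^2 + d₃*s2^2 - 3*α₃*s3^2) - (-2*(α₂+α₃+d₃)*s2*s3)*(-2*(α₃+α₁+d₂)*s1*s3))
      + (2*d₂*s1*s3) * ((2*d₁*s1*s2)*(2*d₃*s2*s3) - (α₂ + d₁*s1^2 - 3*α₂*s2^2 - (α₂+α₃+d₃)*s3^2)*(-2*(α₃+α₁+d₂)*s1*s3))
      = -(2 * (α₁ * (α₃ + d₃) + α₂ * (α₁ + d₂) + α₃ * (α₂ + d₁)) / S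
          * (4 * (α₂ + d₁) * (α₁ + d₂) * (α₃ + d₃) / S)) := by
  rw [div_mul_div_comm, ← neg_div, eq_div_iff (mul_ne_zero hS0 hS0)]
  refine mul_left_cancel₀ hS0 ?_
  linear_combination ((-3)*d₂^2*d₃*S^2*s3^4 + 3*d₁*d₂^2*S^2*s1^2*s3^2 + 3*d₁*d₂^2*d₃*S*s3^2 + 3*d₁^2*d₃*S^2*s2^4 + (-3)*d₁^2*d₂*S^2*s1^2*s2^2 + (-3)*d₁^2*d₂*d₃*S*s2^2 + (-3)*α₃*d₂*d₃*S^2*s3^4 + (-3)*α₃*d₂^2*S^2*s3^4 + (-9)*α₃*d₁*d₃*S^2*s2^2*s3^2 + 1*α₃*d₁*d₂*S^2*s3^2 + (-3)*α₃*d₁*d₂*S^2*s3^4 + (-9)*α₃*d₁*d₂*S^2*s2^2*s3^2 + 3*α₃*d₁*d₂*S^2*s1^2*s3^2 + 3*α₃*d₁*d₂*d₃*S*s3^2 + 3*α₃*d₁*d₂^2*S*s3^2 + 3*α₃*d₁^2*S^2*s2^2 + (-9)*α₃*d₁^2*S^2*s2^2*s3^2 + (-3)*α₃*d₁^2*S^2*s1^2*s2^2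 + (-3)*α₃*d₁^2*d₃*S*s2^2 + (-3)*α₃*d₁^2*d₂*S*s2^2 + (-3)*α₃^2*d₂*S^2*s3^4 + (-9)*α₃^2*d₁*S^2*s2^2*s3^2 + 3*α₃^2*d₁*d₂*S*s3^2 + (-3)*α₃^2*d₁^2*S*s2^2 + (-9)*α₂*d₂*d₃*S^2*s2^2*s3^2 + 3*α₂*d₂^2*S^2*s3^2 + (-3)*α₂*d₂^2*S^2*s3^4 + (-9)*α₂*d₂^2*S^2*s2^2*s3^2 + 3*α₂*d₁*d₃*S^2*s2^4 + 1*α₂*d₁*d₂*S^2*s2^2 + (-9)*α₂*d₁*d₂*S^2*s2^2*s3^2 + (-3)*α₂*d₁*d₂*S^2*s2^4 + (-3)*α₂*d₁*d₂*S^2*s1^2*s2^2 + (-3)*α₂*d₁*d₂*d₃*S*s2^2 + (-9)*α₂*α₃*d₃*S^2*s2^2*s3^2 + 3*α₂*α₃*d₂*S^2*s3^2 + (-3)*α₂*α₃*d₂*S^2*s3^4 + (-18)*α₂*α₃*d₂*S^2*s2^2*s3^2 + 4*α₂*α₃*d₁*S^2*s2^2 + (-18)*α₂*α₃*d₁*S^2*s2^2*s3^2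 + (-3)*α₂*α₃*d₁*S^2*s2^4 + (-3)*α₂*α₃*d₁*S^2*s1^2*s2^2 + (-3)*α₂*α₃*d₁*d₃*S*s2^2 + (-3)*α₂*α₃*d₁*d₂*S*s2^2 + (-9)*α₂*α₃^2*S^2*s2^2*s3^2 + (-3)*α₂*α₃^2*d₁*S*s2^2 + 1*α₂^2*d₂*S^2*s2^2 + (-9)*α₂^2*d₂*S^2*s2^2*s3^2 + (-3)*α₂^2*d₂*S^2*s2^4 + 1*α₂^2*α₃*S^2*s2^2 + (-9)*α₂^2*α₃*S^2*s2^2*s3^2 + (-3)*α₂^2*α₃*S^2*s2^4 + (-9)*α₁*d₃^2*S^2*s2^2*s3^2 + 1*α₁*d₂*d₃*S^2*s3^2 + (-3)*α₁*d₂*d₃*S^2*s3^4 + (-9)*α₁*d₂*d₃*S^2*s2^2*s3^2 + (-3)*α₁*d₂*d₃*S^2*s1^2*s3^2 + (-3)*α₁*d₂*d₃^2*S*s3^2 + 1*α₁*d₁*d₃*S^2*s2^2 + (-9)*α₁*d₁*d₃*S^2*s2^2*s3^2 + 3*α₁*d₁*d₃*S^2*s2^4 + (-3)*α₁*d₁*d₃*S^2*s1^2*s2^2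 + (-3)*α₁*d₁*d₃^2*S*s2^2 + (-1)*α₁*d₁*d₂*S^2*s1^2 + 3*α₁*d₁*d₂*S^2*s1^2*s3^2 + (-3)*α₁*d₁*d₂*S^2*s1^2*s2^2 + 3*α₁*d₁*d₂*S^2*s1^4 + (-1)*α₁*d₁*d₂*d₃*S + 3*α₁*d₁*d₂*d₃*S*s3^2 + (-3)*α₁*d₁*d₂*d₃*S*s2^2 + 3*α₁*d₁*d₂*d₃*S*s1^2 + 3*α₁*d₁*d₂*d₃^2 + (-3)*α₁*d₁^2*S^2*s1^2*s2^2 + (-3)*α₁*d₁^2*d₃*S*s2^2 + 4*α₁*α₃*d₃*S^2*s3^2 + (-9)*α₁*α₃*d₃*S^2*s3^4 + (-18)*α₁*α₃*d₃*S^2*s2^2*s3^2 + (-3)*α₁*α₃*d₃*S^2*s1^2*s3^2 + (-3)*α₁*α₃*d₃^2*S*s3^2 + 1*α₁*α₃*d₂*S^2*s3^2 + (-3)*α₁*α₃*d₂*S^2*s3^4 + (-9)*α₁*α₃*d₂*S^2*s2^2*s3^2 + (-3)*α₁*α₃*d₂*S^2*s1^2*s3^2 + (-6)*α₁*α₃*d₂*d₃*S*s3^2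 + 1*α₁*α₃*d₁*S^2 + (-3)*α₁*α₃*d₁*S^2*s3^2 + 3*α₁*α₃*d₁*S^2*s2^2 + (-18)*α₁*α₃*d₁*S^2*s2^2*s3^2 + (-4)*α₁*α₃*d₁*S^2*s1^2 + 9*α₁*α₃*d₁*S^2*s1^2*s3^2 + (-3)*α₁*α₃*d₁*S^2*s1^2*s2^2 + 3*α₁*α₃*d₁*S^2*s1^4 + (-4)*α₁*α₃*d₁*d₃*S + 9*α₁*α₃*d₁*d₃*S*s3^2 + (-6)*α₁*α₃*d₁*d₃*S*s2^2 + 3*α₁*α₃*d₁*d₃*S*s1^2 + 3*α₁*α₃*d₁*d₃^2 + (-1)*α₁*α₃*d₁*d₂*S + 3*α₁*α₃*d₁*d₂*S*s3^2 + (-3)*α₁*α₃*d₁*d₂*S*s2^2 + 3*α₁*α₃*d₁*d₂*S*s1^2 + 6*α₁*α₃*d₁*d₂*d₃ + (-3)*α₁*α₃*d₁^2*S*s2^2 + 4*α₁*α₃^2*S^2*s3^2 + (-9)*α₁*α₃^2*S^2*s3^4 + (-9)*α₁*α₃^2*S^2*s2^2*s3^2 + (-3)*α₁*α₃^2*S^2*s1^2*s3^2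 + (-6)*α₁*α₃^2*d₃*S*s3^2 + (-3)*α₁*α₃^2*d₂*S*s3^2 + (-4)*α₁*α₃^2*d₁*S + 9*α₁*α₃^2*d₁*S*s3^2 + (-3)*α₁*α₃^2*d₁*S*s2^2 + 3*α₁*α₃^2*d₁*S*s1^2 + 6*α₁*α₃^2*d₁*d₃ + 3*α₁*α₃^2*d₁*d₂ + (-3)*α₁*α₃^3*S*s3^2 + 3*α₁*α₃^3*d₁ + (-3)*α₁*α₂*d₃*S^2*s2^2 + (-18)*α₁*α₂*d₃*S^2*s2^2*s3^2 + 9*α₁*α₂*d₃*S^2*s2^4 + (-1)*α₁*α₂*d₂*S^2 + 4*α₁*α₂*d₂*S^2*s3^2 + (-3)*α₁*α₂*d₂*S^2*s3^4 + 4*α₁*α₂*d₂*S^2*s2^2 + (-18)*α₁*α₂*d₂*S^2*s2^2*s3^2 + (-3)*α₁*α₂*d₂*S^2*s2^4 + 3*α₁*α₂*d₂*S^2*s1^2 + (-3)*α₁*α₂*d₂*S^2*s1^2*s3^2 + (-9)*α₁*α₂*d₂*S^2*s1^2*s2^2 + 3*α₁*α₂*d₂*d₃*S + (-3)*α₁*α₂*d₂*d₃*S*s3^2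 + (-9)*α₁*α₂*d₂*d₃*S*s2^2 + 1*α₁*α₂*d₁*S^2*s2^2 + (-9)*α₁*α₂*d₁*S^2*s2^2*s3^2 + (-3)*α₁*α₂*d₁*S^2*s2^4 + (-3)*α₁*α₂*d₁*S^2*s1^2*s2^2 + (-3)*α₁*α₂*d₁*d₃*S*s2^2 + (-4)*α₁*α₂*α₃*S^2 + 13*α₁*α₂*α₃*S^2*s3^2 + (-9)*α₁*α₂*α₃*S^2*s3^4 + 13*α₁*α₂*α₃*S^2*s2^2 + (-45)*α₁*α₂*α₃*S^2*s2^2*s3^2 + (-3)*α₁*α₂*α₃*S^2*s2^4 + 3*α₁*α₂*α₃*S^2*s1^2 + (-3)*α₁*α₂*α₃*S^2*s1^2*s3^2 + (-9)*α₁*α₂*α₃*S^2*s1^2*s2^2 + 3*α₁*α₂*α₃*d₃*S + (-3)*α₁*α₂*α₃*d₃*S*s3^2 + (-9)*α₁*α₂*α₃*d₃*S*s2^2 + 3*α₁*α₂*α₃*d₂*S + (-3)*α₁*α₂*α₃*d₂*S*s3^2 + (-9)*α₁*α₂*α₃*d₂*S*s2^2 + (-3)*α₁*α₂*α₃*d₁*S*s2^2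 + 3*α₁*α₂*α₃^2*S + (-3)*α₁*α₂*α₃^2*S*s3^2 + (-9)*α₁*α₂*α₃^2*S*s2^2 + 1*α₁*α₂^2*S^2*s2^2 + (-9)*α₁*α₂^2*S^2*s2^2*s3^2 + (-3)*α₁*α₂^2*S^2*s2^4 + 1*α₁^2*d₃*S^2*s3^2 + (-9)*α₁^2*d₃*S^2*s2^2*s3^2 + (-3)*α₁^2*d₃*S^2*s1^2*s3^2 + (-3)*α₁^2*d₃^2*S*s3^2 + (-1)*α₁^2*d₁*S^2*s1^2 + (-3)*α₁^2*d₁*S^2*s1^2*s2^2 + 3*α₁^2*d₁*S^2*s1^4 + (-1)*α₁^2*d₁*d₃*S + (-3)*α₁^2*d₁*d₃*S*s2^2 + 3*α₁^2*d₁*d₃*S*s1^2 + 3*α₁^2*d₁*d₃^2 + 1*α₁^2*α₃*S^2*s3^2 + (-9)*α₁^2*α₃*S^2*s2^2*s3^2 + (-3)*α₁^2*α₃*S^2*s1^2*s3^2 + (-6)*α₁^2*α₃*d₃*S*s3^2 + (-1)*α₁^2*α₃*d₁*S + (-3)*α₁^2*α₃*d₁*S*s2^2 + 3*α₁^2*α₃*d₁*S*s1^2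 + 6*α₁^2*α₃*d₁*d₃ + (-3)*α₁^2*α₃^2*S*s3^2 + 3*α₁^2*α₃^2*d₁ + (-1)*α₁^2*α₂*S^2 + 1*α₁^2*α₂*S^2*s3^2 + 4*α₁^2*α₂*S^2*s2^2 + (-9)*α₁^2*α₂*S^2*s2^2*s3^2 + (-3)*α₁^2*α₂*S^2*s2^4 + 3*α₁^2*α₂*S^2*s1^2 + (-3)*α₁^2*α₂*S^2*s1^2*s3^2 + (-9)*α₁^2*α₂*S^2*s1^2*s2^2 + 3*α₁^2*α₂*d₃*S + (-3)*α₁^2*α₂*d₃*S*s3^2 + (-9)*α₁^2*α₂*d₃*S*s2^2 + 3*α₁^2*α₂*α₃*S + (-3)*α₁^2*α₂*α₃*S*s3^2 + (-9)*α₁^2*α₂*α₃*S*s2^2) * hm1 + (3*d₂*d₃^2*S^2*s3^4 + (-3)*d₁*d₃^2*S^2*s2^2*s3^2 + (-3)*d₁*d₂*d₃^2*S*s3^2 + 3*d₁^2*d₃^2*S*s2^2 + 3*α₃*d₂*d₃*S^2*s3^4 + 1*α₃*d₁*d₃*S^2*s3^2 + (-3)*α₃*d₁*d₃*S^2*s3^4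 + (-3)*α₃*d₁*d₃*S^2*s2^2*s3^2 + (-9)*α₃*d₁*d₃^2*S*s3^2 + (-12)*α₃*d₁*d₂*d₃*S*s3^2 + 3*α₃*d₁^2*d₃*S + (-9)*α₃*d₁^2*d₃*S*s3^2 + 3*α₃*d₁^2*d₃*S*s2^2 + (-3)*α₃*d₁^2*d₃^2 + (-3)*α₃*d₁^2*d₂*d₃ + 1*α₃^2*d₁*S^2*s3^2 + (-3)*α₃^2*d₁*S^2*s3^4 + (-18)*α₃^2*d₁*d₃*S*s3^2 + (-9)*α₃^2*d₁*d₂*S*s3^2 + 3*α₃^2*d₁^2*S + (-9)*α₃^2*d₁^2*S*s3^2 + (-6)*α₃^2*d₁^2*d₃ + (-3)*α₃^2*d₁^2*d₂ + (-9)*α₃^3*d₁*S*s3^2 + (-3)*α₃^3*d₁^2 + (-3)*α₂*d₃^2*S^2*s2^2*s3^2 + 1*α₂*d₂*d₃*S^2*s3^2 + 3*α₂*d₂*d₃*S^2*s3^4 + (-3)*α₂*d₂*d₃*S^2*s2^2*s3^2 + (-12)*α₂*d₂*d₃^2*S*s3^2 + (-12)*α₂*d₂^2*d₃*S*s3^2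 + (-1)*α₂*d₁*d₃*S^2*s2^2 + (-3)*α₂*d₁*d₃*S^2*s2^2*s3^2 + 3*α₂*d₁*d₃*S^2*s2^4 + 3*α₂*d₁*d₃^2*S*s2^2 + (-12)*α₂*d₁*d₂*d₃*S*s3^2 + 1*α₂*α₃*d₃*S^2*s3^2 + (-3)*α₂*α₃*d₃*S^2*s3^4 + (-3)*α₂*α₃*d₃*S^2*s2^2*s3^2 + (-9)*α₂*α₃*d₃^2*S*s3^2 + (-3)*α₂*α₃*d₂*S^2*s3^2 + 9*α₂*α₃*d₂*S^2*s3^4 + (-30)*α₂*α₃*d₂*d₃*S*s3^2 + (-9)*α₂*α₃*d₂^2*S*s3^2 + (-1)*α₂*α₃*d₁*S^2 + 4*α₂*α₃*d₁*S^2*s3^2 + (-3)*α₂*α₃*d₁*S^2*s3^4 + 3*α₂*α₃*d₁*S^2*s2^2 + (-9)*α₂*α₃*d₁*S^2*s2^2*s3^2 + 4*α₂*α₃*d₁*d₃*S + (-18)*α₂*α₃*d₁*d₃*S*s3^2 + (-3)*α₂*α₃*d₁*d₃^2 + 4*α₂*α₃*d₁*d₂*S + (-18)*α₂*α₃*d₁*d₂*S*s3^2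 + (-3)*α₂*α₃*d₁*d₂*S*s2^2 + (-6)*α₂*α₃*d₁*d₂*d₃ + (-3)*α₂*α₃*d₁*d₂^2 + 1*α₂*α₃^2*S^2*s3^2 + (-3)*α₂*α₃^2*S^2*s3^4 + (-18)*α₂*α₃^2*d₃*S*s3^2 + (-18)*α₂*α₃^2*d₂*S*s3^2 + 4*α₂*α₃^2*d₁*S + (-18)*α₂*α₃^2*d₁*S*s3^2 + (-3)*α₂*α₃^2*d₁*S*s2^2 + (-6)*α₂*α₃^2*d₁*d₃ + (-6)*α₂*α₃^2*d₁*d₂ + (-9)*α₂*α₃^3*S*s3^2 + (-3)*α₂*α₃^3*d₁ + (-1)*α₂^2*d₃*S^2*s2^2 + (-3)*α₂^2*d₃*S^2*s2^2*s3^2 + 3*α₂^2*d₃*S^2*s2^4 + (-12)*α₂^2*d₂*d₃*S*s3^2 + (-1)*α₂^2*α₃*S^2 + 4*α₂^2*α₃*S^2*s3^2 + (-3)*α₂^2*α₃*S^2*s3^4 + 3*α₂^2*α₃*S^2*s2^2 + (-9)*α₂^2*α₃*S^2*s2^2*s3^2 + 1*α₂^2*α₃*d₃*S + (-9)*α₂^2*α₃*d₃*S*s3^2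 + (-3)*α₂^2*α₃*d₃*S*s2^2 + 4*α₂^2*α₃*d₂*S + (-18)*α₂^2*α₃*d₂*S*s3^2 + (-3)*α₂^2*α₃*d₂*S*s2^2 + (-3)*α₂^2*α₃*d₂*d₃ + (-3)*α₂^2*α₃*d₂^2 + 1*α₂^2*α₃^2*S + (-9)*α₂^2*α₃^2*S*s3^2 + (-3)*α₂^2*α₃^2*S*s2^2 + (-3)*α₂^2*α₃^2*d₂ + 3*α₁*d₃^2*S^2*s3^2 + (-3)*α₁*d₃^2*S^2*s2^2*s3^2 + (-9)*α₁*d₃^3*S*s3^2 + (-12)*α₁*d₂*d₃^2*S*s3^2 + 1*α₁*d₁*d₃^2*S + (-12)*α₁*d₁*d₃^2*S*s3^2 + 3*α₁*d₁*d₃^2*S*s2^2 + (-3)*α₁*d₁*d₃^3 + 4*α₁*α₃*d₃*S^2*s3^2 + (-3)*α₁*α₃*d₃*S^2*s3^4 + (-3)*α₁*α₃*d₃*S^2*s2^2*s3^2 + (-27)*α₁*α₃*d₃^2*S*s3^2 + (-21)*α₁*α₃*d₂*d₃*S*s3^2 + 4*α₁*α₃*d₁*d₃*S + (-30)*α₁*α₃*d₁*d₃*S*s3^2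 + 3*α₁*α₃*d₁*d₃*S*s2^2 + (-9)*α₁*α₃*d₁*d₃^2 + (-3)*α₁*α₃*d₁*d₂*d₃ + (-3)*α₁*α₃*d₁^2*d₃ + 1*α₁*α₃^2*S^2*s3^2 + (-3)*α₁*α₃^2*S^2*s3^4 + (-27)*α₁*α₃^2*d₃*S*s3^2 + (-9)*α₁*α₃^2*d₂*S*s3^2 + 3*α₁*α₃^2*d₁*S + (-18)*α₁*α₃^2*d₁*S*s3^2 + (-9)*α₁*α₃^2*d₁*d₃ + (-3)*α₁*α₃^2*d₁*d₂ + (-3)*α₁*α₃^2*d₁^2 + (-9)*α₁*α₃^3*S*s3^2 + (-3)*α₁*α₃^3*d₁ + 1*α₁*α₂*d₃*S^2 + 3*α₁*α₂*d₃*S^2*s3^2 + (-4)*α₁*α₂*d₃*S^2*s2^2 + (-3)*α₁*α₂*d₃*S^2*s2^2*s3^2 + 3*α₁*α₂*d₃*S^2*s2^4 + (-3)*α₁*α₂*d₃^2*S + (-21)*α₁*α₂*d₃^2*S*s3^2 + 9*α₁*α₂*d₃^2*S*s2^2 + (-24)*α₁*α₂*d₂*d₃*S*s3^2 + (-12)*α₁*α₂*d₁*d₃*S*s3^2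 + (-4)*α₁*α₂*α₃*S^2 + 13*α₁*α₂*α₃*S^2*s3^2 + (-3)*α₁*α₂*α₃*S^2*s3^4 + 3*α₁*α₂*α₃*S^2*s2^2 + (-9)*α₁*α₂*α₃*S^2*s2^2*s3^2 + 10*α₁*α₂*α₃*d₃*S + (-66)*α₁*α₂*α₃*d₃*S*s3^2 + 6*α₁*α₂*α₃*d₃*S*s2^2 + (-9)*α₁*α₂*α₃*d₃^2 + 7*α₁*α₂*α₃*d₂*S + (-27)*α₁*α₂*α₃*d₂*S*s3^2 + (-3)*α₁*α₂*α₃*d₂*S*s2^2 + (-12)*α₁*α₂*α₃*d₂*d₃ + (-3)*α₁*α₂*α₃*d₂^2 + 4*α₁*α₂*α₃*d₁*S + (-18)*α₁*α₂*α₃*d₁*S*s3^2 + (-3)*α₁*α₂*α₃*d₁*S*s2^2 + (-6)*α₁*α₂*α₃*d₁*d₃ + (-6)*α₁*α₂*α₃*d₁*d₂ + 13*α₁*α₂*α₃^2*S + (-45)*α₁*α₂*α₃^2*S*s3^2 + (-3)*α₁*α₂*α₃^2*S*s2^2 + (-18)*α₁*α₂*α₃^2*d₃ + (-12)*α₁*α₂*α₃^2*d₂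 + (-6)*α₁*α₂*α₃^2*d₁ + (-9)*α₁*α₂*α₃^3 + (-12)*α₁*α₂^2*d₃*S*s3^2 + 4*α₁*α₂^2*α₃*S + (-18)*α₁*α₂^2*α₃*S*s3^2 + (-3)*α₁*α₂^2*α₃*S*s2^2 + (-3)*α₁*α₂^2*α₃*d₃ + (-6)*α₁*α₂^2*α₃*d₂ + (-3)*α₁*α₂^2*α₃^2 + (-12)*α₁^2*d₃^2*S*s3^2 + (-21)*α₁^2*α₃*d₃*S*s3^2 + (-3)*α₁^2*α₃*d₁*d₃ + (-9)*α₁^2*α₃^2*S*s3^2 + (-3)*α₁^2*α₃^2*d₁ + (-12)*α₁^2*α₂*d₃*S*s3^2 + 7*α₁^2*α₂*α₃*S + (-18)*α₁^2*α₂*α₃*S*s3^2 + (-3)*α₁^2*α₂*α₃*S*s2^2 + (-12)*α₁^2*α₂*α₃*d₃ + (-6)*α₁^2*α₂*α₃*d₂ + (-3)*α₁^2*α₂*α₃*d₁ + (-12)*α₁^2*α₂*α₃^2 + (-3)*α₁^2*α₂^2*α₃ + (-3)*α₁^3*α₂*α₃) * hm2 + ((-1)*α₃*d₂*d₃*S^2*s3^2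 + 3*α₃*d₂*d₃*S^2*s3^4 + (-3)*α₃*d₂*d₃^2*S*s3^2 + (-3)*α₃*d₂^2*d₃*S*s3^2 + 1*α₃*d₁*d₂*d₃*S + (-3)*α₃*d₁*d₂*d₃*S*s3^2 + (-9)*α₃*d₁*d₂*d₃^2 + (-9)*α₃*d₁*d₂^2*d₃ + (-12)*α₃*d₁^2*d₂*d₃ + (-1)*α₃^2*d₂*S^2*s3^2 + 3*α₃^2*d₂*S^2*s3^4 + (-6)*α₃^2*d₂*d₃*S*s3^2 + (-3)*α₃^2*d₂^2*S*s3^2 + 1*α₃^2*d₁*d₂*S + (-3)*α₃^2*d₁*d₂*S*s3^2 + (-18)*α₃^2*d₁*d₂*d₃ + (-9)*α₃^2*d₁*d₂^2 + (-12)*α₃^2*d₁^2*d₂ + (-3)*α₃^3*d₂*S*s3^2 + (-9)*α₃^3*d₁*d₂ + 4*α₂*d₂^2*d₃*S + (-12)*α₂*d₂^2*d₃^2 + (-12)*α₂*d₂^3*d₃ + (-12)*α₂*d₁*d₂^2*d₃ + 1*α₂*α₃*d₂*S^2 + (-4)*α₂*α₃*d₂*S^2*s3^2 + 3*α₂*α₃*d₂*S^2*s3^4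 + 3*α₂*α₃*d₂*d₃*S + (-3)*α₂*α₃*d₂*d₃*S*s3^2 + (-12)*α₂*α₃*d₂*d₃^2 + 6*α₂*α₃*d₂^2*S*s3^2 + (-33)*α₂*α₃*d₂^2*d₃ + (-9)*α₂*α₃*d₂^3 + (-24)*α₂*α₃*d₁*d₂*d₃ + (-12)*α₂*α₃*d₁*d₂^2 + 3*α₂*α₃^2*d₂*S + (-3)*α₂*α₃^2*d₂*S*s3^2 + (-24)*α₂*α₃^2*d₂*d₃ + (-21)*α₂*α₃^2*d₂^2 + (-24)*α₂*α₃^2*d₁*d₂ + (-12)*α₂*α₃^3*d₂ + (-12)*α₂^2*d₂^2*d₃ + (-12)*α₂^2*α₃*d₂*d₃ + (-12)*α₂^2*α₃*d₂^2 + (-12)*α₂^2*α₃^2*d₂ + 4*α₁*d₂*d₃^2*S + (-12)*α₁*d₂*d₃^3 + (-12)*α₁*d₂^2*d₃^2 + (-12)*α₁*d₁*d₂*d₃^2 + (-1)*α₁*α₃*d₃*S^2 + 3*α₁*α₃*d₃*S^2*s3^2 + 4*α₁*α₃*d₃^2*S + (-9)*α₁*α₃*d₃^2*S*s3^2 + (-3)*α₁*α₃*d₃^3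 + 6*α₁*α₃*d₂*d₃*S + (-6)*α₁*α₃*d₂*d₃*S*s3^2 + (-36)*α₁*α₃*d₂*d₃^2 + (-21)*α₁*α₃*d₂^2*d₃ + 1*α₁*α₃*d₁*d₃*S + (-3)*α₁*α₃*d₁*d₃*S*s3^2 + (-9)*α₁*α₃*d₁*d₃^2 + (-42)*α₁*α₃*d₁*d₂*d₃ + (-12)*α₁*α₃*d₁^2*d₃ + (-1)*α₁*α₃^2*S^2 + 3*α₁*α₃^2*S^2*s3^2 + 8*α₁*α₃^2*d₃*S + (-18)*α₁*α₃^2*d₃*S*s3^2 + (-9)*α₁*α₃^2*d₃^2 + 2*α₁*α₃^2*d₂*S + (-6)*α₁*α₃^2*d₂*S*s3^2 + (-36)*α₁*α₃^2*d₂*d₃ + (-9)*α₁*α₃^2*d₂^2 + 1*α₁*α₃^2*d₁*S + (-3)*α₁*α₃^2*d₁*S*s3^2 + (-18)*α₁*α₃^2*d₁*d₃ + (-30)*α₁*α₃^2*d₁*d₂ + (-12)*α₁*α₃^2*d₁^2 + 4*α₁*α₃^3*S + (-9)*α₁*α₃^3*S*s3^2 + (-9)*α₁*α₃^3*d₃ +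 (-12)*α₁*α₃^3*d₂ + (-9)*α₁*α₃^3*d₁ + (-3)*α₁*α₃^4 + 8*α₁*α₂*d₂*d₃*S + (-36)*α₁*α₂*d₂*d₃^2 + (-36)*α₁*α₂*d₂^2*d₃ + (-24)*α₁*α₂*d₁*d₂*d₃ + (-4)*α₁*α₂*α₃*S^2 + 3*α₁*α₂*α₃*S^2*s3^2 + 17*α₁*α₂*α₃*d₃*S + (-12)*α₁*α₂*α₃*d₃*S*s3^2 + (-21)*α₁*α₂*α₃*d₃^2 + 14*α₁*α₂*α₃*d₂*S + 3*α₁*α₂*α₃*d₂*S*s3^2 + (-108)*α₁*α₂*α₃*d₂*d₃ + (-36)*α₁*α₂*α₃*d₂^2 + 7*α₁*α₂*α₃*d₁*S + (-3)*α₁*α₂*α₃*d₁*S*s3^2 + (-33)*α₁*α₂*α₃*d₁*d₃ + (-33)*α₁*α₂*α₃*d₁*d₂ + (-3)*α₁*α₂*α₃*d₁^2 + 17*α₁*α₂*α₃^2*S + (-12)*α₁*α₂*α₃^2*S*s3^2 + (-42)*α₁*α₂*α₃^2*d₃ + (-72)*α₁*α₂*α₃^2*d₂ + (-33)*α₁*α₂*α₃^2*d₁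 + (-21)*α₁*α₂*α₃^3 + (-24)*α₁*α₂^2*d₂*d₃ + 7*α₁*α₂^2*α₃*S + (-3)*α₁*α₂^2*α₃*S*s3^2 + (-21)*α₁*α₂^2*α₃*d₃ + (-33)*α₁*α₂^2*α₃*d₂ + (-6)*α₁*α₂^2*α₃*d₁ + (-21)*α₁*α₂^2*α₃^2 + (-3)*α₁*α₂^3*α₃ + 4*α₁^2*d₃^2*S + (-12)*α₁^2*d₃^3 + (-24)*α₁^2*d₂*d₃^2 + (-12)*α₁^2*d₁*d₃^2 + 6*α₁^2*α₃*d₃*S + (-3)*α₁^2*α₃*d₃*S*s3^2 + (-36)*α₁^2*α₃*d₃^2 + (-42)*α₁^2*α₃*d₂*d₃ + (-33)*α₁^2*α₃*d₁*d₃ + 2*α₁^2*α₃^2*S + (-3)*α₁^2*α₃^2*S*s3^2 + (-36)*α₁^2*α₃^2*d₃ + (-18)*α₁^2*α₃^2*d₂ + (-21)*α₁^2*α₃^2*d₁ + (-12)*α₁^2*α₃^3 + 4*α₁^2*α₂*d₃*S + (-24)*α₁^2*α₂*d₃^2 + (-36)*α₁^2*α₂*d₂*d₃ + (-12)*α₁^2*α₂*d₁*d₃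 + 14*α₁^2*α₂*α₃*S + (-3)*α₁^2*α₂*α₃*S*s3^2 + (-75)*α₁^2*α₂*α₃*d₃ + (-45)*α₁^2*α₂*α₃*d₂ + (-21)*α₁^2*α₂*α₃*d₁ + (-51)*α₁^2*α₂*α₃^2 + (-12)*α₁^2*α₂^2*d₃ + (-21)*α₁^2*α₂^2*α₃ + (-12)*α₁^3*d₃^2 + (-21)*α₁^3*α₃*d₃ + (-9)*α₁^3*α₃^2 + (-12)*α₁^3*α₂*d₃ + (-18)*α₁^3*α₂*α₃) * hm3 + (12*α₃*d₁^2*d₂*d₃ + 12*α₃^2*d₁^2*d₂ + 12*α₂*d₁*d₂^2*d₃ + 24*α₂*α₃*d₁*d₂*d₃ + 12*α₂*α₃*d₁*d₂^2 + 24*α₂*α₃^2*d₁*d₂ + 12*α₂^2*d₂^2*d₃ + 12*α₂^2*α₃*d₂*d₃ + 12*α₂^2*α₃*d₂^2 + 12*α₂^2*α₃^2*d₂ + 12*α₁*d₁*d₂*d₃^2 + 24*α₁*α₃*d₁*d₂*d₃ + 12*α₁*α₃*d₁^2*d₃ + 12*α₁*α₃^2*d₁*d₂ + 12*α₁*α₃^2*d₁^2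 + 12*α₁*α₂*d₂*d₃^2 + 24*α₁*α₂*d₁*d₂*d₃ + 1*α₁*α₂*α₃*S^2 + (-4)*α₁*α₂*α₃*d₃*S + 3*α₁*α₂*α₃*d₃^2 + (-4)*α₁*α₂*α₃*d₂*S + 30*α₁*α₂*α₃*d₂*d₃ + 3*α₁*α₂*α₃*d₂^2 + (-4)*α₁*α₂*α₃*d₁*S + 30*α₁*α₂*α₃*d₁*d₃ + 30*α₁*α₂*α₃*d₁*d₂ + 3*α₁*α₂*α₃*d₁^2 + (-4)*α₁*α₂*α₃^2*S + 6*α₁*α₂*α₃^2*d₃ + 18*α₁*α₂*α₃^2*d₂ + 30*α₁*α₂*α₃^2*d₁ + 3*α₁*α₂*α₃^3 + 24*α₁*α₂^2*d₂*d₃ + (-4)*α₁*α₂^2*α₃*S + 18*α₁*α₂^2*α₃*d₃ + 30*α₁*α₂^2*α₃*d₂ + 6*α₁*α₂^2*α₃*d₁ + 18*α₁*α₂^2*α₃^2 + 3*α₁*α₂^3*α₃ + 12*α₁^2*d₁*d₃^2 + 24*α₁^2*α₃*d₁*d₃ + 12*α₁^2*α₃^2*d₁ + 12*α₁^2*α₂*d₃^2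 + 12*α₁^2*α₂*d₁*d₃ + (-4)*α₁^2*α₂*α₃*S + 30*α₁^2*α₂*α₃*d₃ + 6*α₁^2*α₂*α₃*d₂ + 18*α₁^2*α₂*α₃*d₁ + 18*α₁^2*α₂*α₃^2 + 12*α₁^2*α₂^2*d₃ + 18*α₁^2*α₂^2*α₃ + 3*α₁^3*α₂*α₃) * hSdef

open Polynomial in
lemma cubic_charpoly_factor (M : Matrix (Fin 3) (Fin 3) ℝ) (k m : ℝ)
    (h1 : M 0 0 + M 1 1 + M 2 2 = -k)
    (h2 : M 0 0 * M 1 1 - M 0 1 * M 1 0 + M 0 0 * M 2 2 - M 0 2 * M 2 0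
        + M 1 1 * M 2 2 - M 1 2 * M 2 1 = m)
    (h3 : M 0 0 * (M 1 1 * M 2 2 - M 1 2 * M 2 1)
        - M 0 1 * (M 1 0 * M 2 2 - M 1 2 * M 2 0)
        + M 0 2 * (M 1 0 * M 2 1 - M 1 1 * M 2 0) = -(k * m)) :
    M.charpoly = (X + C k) * (X ^ 2 + C m) := by
  have hc1 := congrArg (C : ℝ →+* ℝ[X]) h1
  have hc2 := congrArg (C : ℝ →+* ℝ[X]) h2
  have hc3 := congrArg (C : ℝ →+* ℝ[X]) h3
  simp only [map_add, map_sub, map_mul, map_neg] at hc1 hc2 hc3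
  rw [Matrix.charpoly, Matrix.det_fin_three]
  rw [Matrix.charmatrix_apply_ne _ _ _ (show (0:Fin 3) ≠ 1 by decide),
    Matrix.charmatrix_apply_ne _ _ _ (show (0:Fin 3) ≠ 2 by decide),
    Matrix.charmatrix_apply_ne _ _ _ (show (1:Fin 3) ≠ 0 by decide),
    Matrix.charmatrix_apply_ne _ _ _ (show (1:Fin 3) ≠ 2 by decide),
    Matrix.charmatrix_apply_ne _ _ _ (show (2:Fin 3) ≠ 0 by decide),
    Matrix.charmatrix_apply_ne _ _ _ (show (2:Fin 3) ≠ 1 by decide),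
    Matrix.charmatrix_apply_eq, Matrix.charmatrix_apply_eq, Matrix.charmatrix_apply_eq]
  linear_combination (-(Polynomial.X ^ 2) : ℝ[X]) * hc1 + Polynomial.X * hc2 - hc3

/-- At the interior equilibrium `Q*`, the characteristic polynomial of the Jacobian
matrix of `b` factors as `(X + 2σ₁/σ₂)(X² + λ²)` with
`λ² = 4(α₂+d₁)(α₁+d₂)(α₃+d₃)/σ₂`; hence the eigenvalues are `−2σ₁/σ₂` and `±iλ`. -/
theorem charpoly_jacobian_at_Qstar (α₁ α₂ α₃ d₁ d₂ d₃ σ₁ σ₂ : ℝ)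
    (hα₁ : 0 < α₁) (hα₂ : 0 < α₂) (hα₃ : 0 < α₃)
    (h1 : 0 < α₁ + d₂) (h2 : 0 < α₂ + d₁) (h3 : 0 < α₃ + d₃)
    (hσ₁ : σ₁ = α₁ * (α₃ + d₃) + α₂ * (α₁ + d₂) + α₃ * (α₂ + d₁))
    (hσ₂ : σ₂ = (α₁ + d₂) + (α₂ + d₁) + (α₃ + d₃))
    (Q : EuclideanSpace ℝ (Fin 3))
    (hQ : Q = (WithLp.equiv 2 (Fin 3 → ℝ)).symm
      ![Real.sqrt ((α₃ + d₃) / σ₂), Real.sqrt ((α₁ + d₂) / σ₂),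
        Real.sqrt ((α₂ + d₁) / σ₂)]) :
    (Matrix.of fun i j : Fin 3 =>
        fderiv ℝ (bVF α₁ α₂ α₃ d₁ d₂ d₃) Q (EuclideanSpace.single j 1) i).charpoly
      = (Polynomial.X + Polynomial.C (2 * σ₁ / σ₂)) *
        (Polynomial.X ^ 2 +
          Polynomial.C (4 * (α₂ + d₁) * (α₁ + d₂) * (α₃ + d₃) / σ₂)) := by
  subst hσ₁ hσ₂ hQ
  have hS : 0 < (α₁ + d₂) + (α₂ + d₁) + (α₃ + d₃) := by linarith
  set S := (α₁ + d₂) + (α₂ + d₁) + (α₃ + d₃) with hSdef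
  set s1 := Real.sqrt ((α₃ + d₃) / S) with hs1def
  set s2 := Real.sqrt ((α₁ + d₂) / S) with hs2def
  set s3 := Real.sqrt ((α₂ + d₁) / S) with hs3def
  set Q : EuclideanSpace ℝ (Fin 3) := (WithLp.equiv 2 (Fin 3 → ℝ)).symm ![s1, s2, s3] with hQdef
  have hQ0 : Q 0 = s1 := by rw [hQdef, WithLp.equiv_symm_apply]; rfl
  have hQ1 : Q 1 = s2 := by rw [hQdef, WithLp.equiv_symm_apply]; rfl
  have hQ2 : Q 2 = s3 := by rw [hQdef, WithLp.equiv_symm_apply]; rfl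
  have k0 : HasFDerivAt (fun y : EuclideanSpace ℝ (Fin 3) =>
      y 0 * (α₁ - α₁ * (y 0)^2 - (α₁ + α₂ + d₁) * (y 1)^2 + d₂ * (y 2)^2))
      (Dc 0 α₁ (-α₁) (-(α₁ + α₂ + d₁)) d₂ Q) Q := by
    have hfe : (fun y : EuclideanSpace ℝ (Fin 3) =>
        y 0 * (α₁ - α₁ * (y 0)^2 - (α₁ + α₂ + d₁) * (y 1)^2 + d₂ * (y 2)^2))
        = fun y : EuclideanSpace ℝ (Fin 3) =>
          y 0 * (α₁ + (-α₁) * (y 0 * y 0) + (-(α₁ + α₂ + d₁)) * (y 1 * y 1) + d₂ * (y 2 * y 2)) := by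
      funext y; ring
    rw [hfe]; exact hasFDerivAt_aux _ _ _ _ 0 Q
  have k1 : HasFDerivAt (fun y : EuclideanSpace ℝ (Fin 3) =>
      y 1 * (α₂ + d₁ * (y 0)^2 - α₂ * (y 1)^2 - (α₂ + α₃ + d₃) * (y 2)^2))
      (Dc 1 α₂ d₁ (-α₂) (-(α₂ + α₃ + d₃)) Q) Q := by
    have hfe : (fun y : EuclideanSpace ℝ (Fin 3) =>
        y 1 * (α₂ + d₁ * (y 0)^2 - α₂ * (y 1)^2 - (α₂ + α₃ + d₃) * (y 2)^2))
        = fun y : EuclideanSpace ℝ (Fin 3) =>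
          y 1 * (α₂ + d₁ * (y 0 * y 0) + (-α₂) * (y 1 * y 1) + (-(α₂ + α₃ + d₃)) * (y 2 * y 2)) := by
      funext y; ring
    rw [hfe]; exact hasFDerivAt_aux _ _ _ _ 1 Q
  have k2 : HasFDerivAt (fun y : EuclideanSpace ℝ (Fin 3) =>
      y 2 * (α₃ - (α₃ + α₁ + d₂) * (y 0)^2 + d₃ * (y 1)^2 - α₃ * (y 2)^2))
      (Dc 2 α₃ (-(α₃ + α₁ + d₂)) d₃ (-α₃) Q) Q := by
    have hfe : (fun y : EuclideanSpace ℝ (Fin 3) =>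
        y 2 * (α₃ - (α₃ + α₁ + d₂) * (y 0)^2 + d₃ * (y 1)^2 - α₃ * (y 2)^2))
        = fun y : EuclideanSpace ℝ (Fin 3) =>
          y 2 * (α₃ + (-(α₃ + α₁ + d₂)) * (y 0 * y 0) + d₃ * (y 1 * y 1) + (-α₃) * (y 2 * y 2)) := by
      funext y; ring
    rw [hfe]; exact hasFDerivAt_aux _ _ _ _ 2 Q
  have hg : HasFDerivAt (fun x : EuclideanSpace ℝ (Fin 3) =>
      (![x 0 * (α₁ - α₁ * (x 0)^2 - (α₁ + α₂ + d₁) * (x 1)^2 + d₂ * (x 2)^2),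
        x 1 * (α₂ + d₁ * (x 0)^2 - α₂ * (x 1)^2 - (α₂ + α₃ + d₃) * (x 2)^2),
        x 2 * (α₃ - (α₃ + α₁ + d₂) * (x 0)^2 + d₃ * (x 1)^2 - α₃ * (x 2)^2)] : Fin 3 → ℝ))
      (ContinuousLinearMap.pi
        ![Dc 0 α₁ (-α₁) (-(α₁ + α₂ + d₁)) d₂ Q, Dc 1 α₂ d₁ (-α₂) (-(α₂ + α₃ + d₃)) Q,
          Dc 2 α₃ (-(α₃ + α₁ + d₂)) d₃ (-α₃) Q]) Q := by
    rw [hasFDerivAt_pi']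
    intro i
    fin_cases i <;>
      simp only [ContinuousLinearMap.proj_pi, Fin.zero_eta, Fin.mk_one, Fin.isValue,
        Matrix.cons_val_zero, Matrix.cons_val_one, Matrix.head_cons, Matrix.cons_val_two,
        Matrix.tail_cons]
    · exact k0
    · exact k1
    · exact k2
  have hb : HasFDerivAt (bVF α₁ α₂ α₃ d₁ d₂ d₃)
      (((PiLp.continuousLinearEquiv 2 ℝ (fun _ : Fin 3 => ℝ)).symm :
          (Fin 3 → ℝ) →L[ℝ] EuclideanSpace ℝ (Fin 3)).comp
        (ContinuousLinearMap.pi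
          ![Dc 0 α₁ (-α₁) (-(α₁ + α₂ + d₁)) d₂ Q, Dc 1 α₂ d₁ (-α₂) (-(α₂ + α₃ + d₃)) Q,
            Dc 2 α₃ (-(α₃ + α₁ + d₂)) d₃ (-α₃) Q])) Q :=
    (((PiLp.continuousLinearEquiv 2 ℝ (fun _ : Fin 3 => ℝ)).symm :
        (Fin 3 → ℝ) →L[ℝ] EuclideanSpace ℝ (Fin 3)).hasFDerivAt).comp Q hg
  have hfd := hb.fderiv
  have hs1 : s1 ^ 2 = (α₃ + d₃) / S := Real.sq_sqrt (by positivity)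
  have hs2 : s2 ^ 2 = (α₁ + d₂) / S := Real.sq_sqrt (by positivity)
  have hs3 : s3 ^ 2 = (α₂ + d₁) / S := Real.sq_sqrt (by positivity)
  have hS0 : S ≠ 0 := ne_of_gt hS
  have hm1 : s1 ^ 2 * S = α₃ + d₃ := by rw [hs1, div_mul_cancel₀ _ hS0]
  have hm2 : s2 ^ 2 * S = α₁ + d₂ := by rw [hs2, div_mul_cancel₀ _ hS0]
  have hm3 : s3 ^ 2 * S = α₂ + d₁ := by rw [hs3, div_mul_cancel₀ _ hS0]
  have hent : ∀ i j : Fin 3,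
      (Matrix.of fun i j : Fin 3 =>
        fderiv ℝ (bVF α₁ α₂ α₃ d₁ d₂ d₃) Q (EuclideanSpace.single j 1) i) i j
      = (![Dc 0 α₁ (-α₁) (-(α₁ + α₂ + d₁)) d₂ Q, Dc 1 α₂ d₁ (-α₂) (-(α₂ + α₃ + d₃)) Q,
          Dc 2 α₃ (-(α₃ + α₁ + d₂)) d₃ (-α₃) Q] i) (EuclideanSpace.single j 1) := by
    intro i j
    rw [Matrix.of_apply, hfd]
    rfl
  refine cubic_charpoly_factor _ _ _ ?_ ?_ ?_ <;>
    simp only [hent, Matrix.cons_val_zero, Matrix.cons_val_one, Matrix.head_cons,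
      Matrix.cons_val_two, Matrix.tail_cons, Dc_single, hQ0, hQ1, hQ2] <;>
    norm_num [Fin.ext_iff]
  · linear_combination ident1 α₁ α₂ α₃ d₁ d₂ d₃ S s1 s2 s3 hS0 hSdef hm1 hm2 hm3
  · linear_combination ident2 α₁ α₂ α₃ d₁ d₂ d₃ S s1 s2 s3 hS0 hSdef hm1 hm2 hm3
  · linear_combination ident3 α₁ α₂ α₃ d₁ d₂ d₃ S s1 s2 s3 hS0 hSdef hm1 hm2 hm3
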